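/- In (ℝⁿ, ‖·‖₁) with n ≥ 1, min over y with ‖y‖₁ = 1 of max over x with ‖x‖₁ = 1 of (‖x - y‖₁ + ‖x + y‖₁) equals 4 - 2/n. -/

import Mathlib

private lemma norm1 {n : ℕ} (x : PiLp 1 (fun _ : Fin n => ℝ)) : ‖x‖ = ∑ i, |x i| := by
  rw [PiLp.norm_eq_sum (by norm_num)]
  simp [Real.norm_eq_abs]

private lemma abs_key (a b : ℝ) : |a - b| + |a + b| = 2 * max |a| |b| := by
  rcases abs_cases (a - b) with ⟨h1, h1'⟩ | ⟨h1, h1'⟩ <;>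
  rcases abs_cases (a + b) with ⟨h2, h2'⟩ | ⟨h2, h2'⟩ <;>
  rcases abs_cases a with ⟨h3, h3'⟩ | ⟨h3, h3'⟩ <;>
  rcases abs_cases b with ⟨h4, h4'⟩ | ⟨h4, h4'⟩ <;>
  rcases max_cases |a| |b| with ⟨h5, h5'⟩ | ⟨h5, h5'⟩ <;>
  linarith

private lemma val_eq {n : ℕ} (x y : PiLp 1 (fun _ : Fin n => ℝ)) :
    ‖x - y‖ + ‖x + y‖ = ∑ i, 2 * max |x i| |y i| := by
  rw [norm1, norm1, ← Finset.sum_add_distrib]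
  exact Finset.sum_congr rfl fun i _ => abs_key (x i) (y i)

private lemma norm_single {n : ℕ} (i : Fin n) :
    ‖(WithLp.equiv 1 (Fin n → ℝ)).symm (Pi.single i 1)‖ = 1 := by
  rw [norm1]
  simp [Pi.single_apply, apply_ite abs, Finset.sum_ite_eq']

private lemma lb {n : ℕ} (hn : 1 ≤ n) (y : PiLp 1 (fun _ : Fin n => ℝ)) (hy : ‖y‖ = 1) :
    ∃ x : PiLp 1 (fun _ : Fin n => ℝ), ‖x‖ = 1 ∧ 4 - 2 / n ≤ ‖x - y‖ + ‖x + y‖ := by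
  have hn0 : (0 : ℝ) < n := by exact_mod_cast hn
  have hsum : ∑ j, |y j| = 1 := by rw [← norm1, hy]
  have hne : (Finset.univ : Finset (Fin n)).Nonempty := ⟨⟨0, hn⟩, Finset.mem_univ _⟩
  obtain ⟨i, hi⟩ : ∃ i, |y i| ≤ 1 / n := by
    by_contra h
    push_neg at h
    have h1 : ∑ _j : Fin n, (1 / n : ℝ) < ∑ j, |y j| :=
      Finset.sum_lt_sum_of_nonempty hne fun j _ => h j
    rw [Finset.sum_const, Finset.card_univ, Fintype.card_fin, nsmul_eq_mul] at h1
    rw [hsum] at h1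
    field_simp at h1
    exact lt_irrefl _ h1
  refine ⟨(WithLp.equiv 1 (Fin n → ℝ)).symm (Pi.single i 1), norm_single i, ?_⟩
  set x := (WithLp.equiv 1 (Fin n → ℝ)).symm (Pi.single i 1) with hxdef
  have hxi : ∀ j, x j = (Pi.single i (1:ℝ) : Fin n → ℝ) j := fun j => by
    rw [hxdef, WithLp.equiv_symm_apply, PiLp.toLp_apply]
  rw [val_eq]
  have hyi1 : |y i| ≤ 1 :=
    hsum ▸ Finset.single_le_sum (fun j _ => abs_nonneg (y j)) (Finset.mem_univ i)
  have hsplit : ∑ j, 2 * max |x j| |y j|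
      = 2 * max |x i| |y i| + ∑ j ∈ Finset.univ.erase i, 2 * max |x j| |y j| :=
    (Finset.add_sum_erase _ _ (Finset.mem_univ i)).symm
  have h1 : max |x i| |y i| = 1 := by
    rw [hxi i, Pi.single_eq_same]
    simp [max_eq_left, hyi1]
  have h2 : ∀ j ∈ Finset.univ.erase i, 2 * max |x j| |y j| = 2 * |y j| := by
    intro j hj
    rw [hxi j, Pi.single_eq_of_ne (Finset.ne_of_mem_erase hj)]
    simp
  rw [hsplit, Finset.sum_congr rfl h2, h1, ← Finset.mul_sum]
  have h3 := Finset.add_sum_erase Finset.univ (fun j => |y j|) (Finset.mem_univ i)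
  have h4 : ∑ j ∈ Finset.univ.erase i, |y j| = 1 - |y i| := by
    simp only at h3; linarith
  have h5 : (2:ℝ)/n = 2 * (1/n) := by ring
  rw [h4, h5]
  linarith


private lemma ub {n : ℕ} (hn : 1 ≤ n)
    (x : PiLp 1 (fun _ : Fin n => ℝ)) (hx : ‖x‖ = 1) :
    ‖x - (WithLp.equiv 1 (Fin n → ℝ)).symm (fun _ => (n:ℝ)⁻¹)‖ +
    ‖x + (WithLp.equiv 1 (Fin n → ℝ)).symm (fun _ => (n:ℝ)⁻¹)‖ ≤ 4 - 2 / n := by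
  have hn0 : (0:ℝ) < n := by exact_mod_cast hn
  set y := (WithLp.equiv 1 (Fin n → ℝ)).symm (fun _ => (n:ℝ)⁻¹) with hydef
  have hyj : ∀ j, y j = (n:ℝ)⁻¹ := fun j => by rw [hydef, WithLp.equiv_symm_apply, PiLp.toLp_apply]
  rw [val_eq]
  have hsum : ∑ j, |x j| = 1 := by rw [← norm1, hx]
  obtain ⟨i, hi⟩ : ∃ i, (n:ℝ)⁻¹ ≤ |x i| := by
    by_contra h
    push_neg at h
    have h1 : ∑ j, |x j| < ∑ _j : Fin n, (n:ℝ)⁻¹ :=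
      Finset.sum_lt_sum_of_nonempty ⟨⟨0, hn⟩, Finset.mem_univ _⟩ fun j _ => h j
    rw [hsum, Finset.sum_const, Finset.card_univ, Fintype.card_fin, nsmul_eq_mul,
      mul_inv_cancel₀ hn0.ne'] at h1
    exact lt_irrefl _ h1
  have key : ∀ j, 2 * max |x j| |y j| = 2 * |x j| + 2 * (n:ℝ)⁻¹ - 2 * min |x j| ((n:ℝ)⁻¹) := by
    intro j
    have habs : |((n:ℝ)⁻¹)| = (n:ℝ)⁻¹ := abs_of_nonneg (by positivity)
    rw [hyj j, habs]
    have := max_add_min |x j| ((n:ℝ)⁻¹)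
    linarith
  rw [Finset.sum_congr rfl fun j _ => key j, Finset.sum_sub_distrib, Finset.sum_add_distrib,
    ← Finset.mul_sum, ← Finset.mul_sum, hsum, Finset.sum_const, Finset.card_univ,
    Fintype.card_fin, nsmul_eq_mul, mul_inv_cancel₀ hn0.ne']
  have hmin : (n:ℝ)⁻¹ ≤ ∑ j, min |x j| ((n:ℝ)⁻¹) := by
    have h1 : min |x i| ((n:ℝ)⁻¹) = (n:ℝ)⁻¹ := min_eq_right hi
    calc (n:ℝ)⁻¹ = min |x i| ((n:ℝ)⁻¹) := h1.symm
      _ ≤ ∑ j, min |x j| ((n:ℝ)⁻¹) :=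
        Finset.single_le_sum (f := fun j => min |x j| ((n:ℝ)⁻¹))
          (fun j _ => le_min (abs_nonneg _) (by positivity)) (Finset.mem_univ i)
  have h5 : (2:ℝ)/n = 2 * (n:ℝ)⁻¹ := by ring
  have hmul : ∑ j, 2 * min |x j| ((n:ℝ)⁻¹) = 2 * ∑ j, min |x j| ((n:ℝ)⁻¹) :=
    (Finset.mul_sum _ _ _).symm
  rw [h5]
  linarith

theorem stmt_15 (n : ℕ) (hn : 1 ≤ n) :
    sInf {m : ℝ | ∃ y : PiLp 1 (fun _ : Fin n => ℝ), ‖y‖ = 1 ∧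
      m = sSup {r : ℝ | ∃ x : PiLp 1 (fun _ : Fin n => ℝ),
        ‖x‖ = 1 ∧ r = ‖x - y‖ + ‖x + y‖}} = 4 - 2 / n := by
  have hn0 : (0:ℝ) < n := by exact_mod_cast hn
  have hbdd : ∀ y : PiLp 1 (fun _ : Fin n => ℝ), ‖y‖ = 1 →
      BddAbove {r : ℝ | ∃ x : PiLp 1 (fun _ : Fin n => ℝ), ‖x‖ = 1 ∧ r = ‖x - y‖ + ‖x + y‖} := by
    intro y hy
    refine ⟨4, ?_⟩
    rintro r ⟨x, hx, rfl⟩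
    have h1 := norm_sub_le x y
    have h2 := norm_add_le x y
    rw [hx, hy] at h1 h2
    linarith
  have hlow : ∀ y : PiLp 1 (fun _ : Fin n => ℝ), ‖y‖ = 1 →
      4 - 2 / n ≤ sSup {r : ℝ | ∃ x : PiLp 1 (fun _ : Fin n => ℝ),
        ‖x‖ = 1 ∧ r = ‖x - y‖ + ‖x + y‖} := by
    intro y hy
    obtain ⟨x, hx, hxv⟩ := lb hn y hy
    exact le_trans hxv (le_csSup (hbdd y hy) ⟨x, hx, rfl⟩)
  set y₀ : PiLp 1 (fun _ : Fin n => ℝ) := (WithLp.equiv 1 (Fin n → ℝ)).symm (fun _ => (n:ℝ)⁻¹)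
    with hy₀def
  have hy₀ : ‖y₀‖ = 1 := by
    rw [norm1]
    have : ∀ j : Fin n, |y₀ j| = (n:ℝ)⁻¹ := fun j => by
      rw [hy₀def, WithLp.equiv_symm_apply, PiLp.toLp_apply, abs_of_nonneg (by positivity)]
    rw [Finset.sum_congr rfl fun j _ => this j, Finset.sum_const, Finset.card_univ,
      Fintype.card_fin, nsmul_eq_mul, mul_inv_cancel₀ hn0.ne']
  have hmem : (4 - 2 / (n:ℝ)) ∈ {m : ℝ | ∃ y : PiLp 1 (fun _ : Fin n => ℝ), ‖y‖ = 1 ∧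
      m = sSup {r : ℝ | ∃ x : PiLp 1 (fun _ : Fin n => ℝ),
        ‖x‖ = 1 ∧ r = ‖x - y‖ + ‖x + y‖}} := by
    refine ⟨y₀, hy₀, le_antisymm ?_ ?_⟩
    · exact hlow y₀ hy₀
    · refine csSup_le ⟨‖(WithLp.equiv 1 (Fin n → ℝ)).symm (Pi.single (⟨0, hn⟩ : Fin n) 1) - y₀‖ +
        ‖(WithLp.equiv 1 (Fin n → ℝ)).symm (Pi.single (⟨0, hn⟩ : Fin n) 1) + y₀‖,
        ⟨_, norm_single _, rfl⟩⟩ ?_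
      rintro r ⟨x, hx, rfl⟩
      exact ub hn x hx
  refine le_antisymm (csInf_le ⟨4 - 2 / n, ?_⟩ hmem) (le_csInf ⟨_, hmem⟩ ?_)
  · rintro m ⟨y, hy, rfl⟩
    exact hlow y hy
  · rintro m ⟨y, hy, rfl⟩
    exact hlow y hy
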